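/- Suppose a family of vector linear functionals 𝓤(t) satisfies 𝓤(t)(𝓟) = (e^{x²t}𝓤⁰)(𝓟)·E(t) where E(t) = [(e^{x²t}𝓤⁰)(𝓟₀)]⁻¹, in the sense that the moments are 𝓤ₙ(t) = Gₙ(t)·E(t) with Gₙ(t) = Σ_{k≥0} (tᵏ/k!)·𝓤⁰ₙ₊ₖ and E(t) = G₀(t)⁻¹. Then the moments satisfy d𝓤ₙ/dt = 𝓤ₙ₊₁ − 𝓤ₙ·𝓤₁ for all n. -/

import Mathlib

/-- Derivative of an exponential-type power series with exponentially bounded coefficients. -/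
lemma tsum_exp_hasDerivAt (B Q : ℝ) (hB : 0 ≤ B) (hQ : 0 ≤ Q) (a : ℕ → ℂ)
    (hb : ∀ k, ‖a k‖ ≤ B * Q ^ k) (t : ℝ) :
    HasDerivAt (fun s : ℝ => ∑' k : ℕ, ((s : ℂ) ^ k / (Nat.factorial k : ℂ)) * a k)
      (∑' k : ℕ, ((t : ℂ) ^ k / (Nat.factorial k : ℂ)) * a (k + 1)) t := by
  set r : ℝ := |t| + 1 with hrdef
  have hr1 : (1 : ℝ) ≤ r := by have := abs_nonneg t; linarith
  have hr0 : (0 : ℝ) < r := by linarith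
  set u : ℕ → ℝ := fun k => B * ((2 * r * Q) ^ k / (Nat.factorial k : ℝ)) with hudef
  have hu : Summable u := (Real.summable_pow_div_factorial (2 * r * Q)).mul_left B
  set g : ℕ → ℝ → ℂ := fun k s => ((s : ℂ) ^ k / (Nat.factorial k : ℂ)) * a k with hgdef
  set g' : ℕ → ℝ → ℂ :=
    fun k s => (((k : ℂ) * (s : ℂ) ^ (k - 1)) / (Nat.factorial k : ℂ)) * a k with hg'def
  have hg : ∀ k (s : ℝ), HasDerivAt (g k) (g' k s) s := by
    intro k s
    have h1 : HasDerivAt (fun z : ℂ => z ^ k / (Nat.factorial k : ℂ) * a k)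
        ((k : ℂ) * (s : ℂ) ^ (k - 1) / (Nat.factorial k : ℂ) * a k) (s : ℂ) :=
      ((hasDerivAt_pow k ((s : ℂ))).div_const _).mul_const _
    exact h1.comp_ofReal
  have ht : t ∈ Set.Ioo (-r) r := by
    constructor
    · have := neg_abs_le t; linarith
    · have := le_abs_self t; linarith
  have hkey : ∀ (k : ℕ) (s : ℝ), |s| ≤ r →
      ((k : ℝ) * |s| ^ (k - 1) / (Nat.factorial k : ℝ)) * (B * Q ^ k) ≤ u k := by
    intro k s hsr
    have h2k : ((k : ℝ)) ≤ 2 ^ k := by exact_mod_cast (Nat.lt_two_pow_self (n := k)).le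
    have hsk : |s| ^ (k - 1) ≤ r ^ k :=
      le_trans (pow_le_pow_left₀ (abs_nonneg s) hsr _)
        (pow_le_pow_right₀ hr1 (Nat.sub_le k 1))
    have hmain : (k : ℝ) * |s| ^ (k - 1) * Q ^ k ≤ (2 * r * Q) ^ k := by
      have h1 : (k : ℝ) * |s| ^ (k - 1) ≤ 2 ^ k * r ^ k :=
        mul_le_mul h2k hsk (by positivity) (by positivity)
      calc (k : ℝ) * |s| ^ (k - 1) * Q ^ k ≤ 2 ^ k * r ^ k * Q ^ k :=
            mul_le_mul_of_nonneg_right h1 (by positivity)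
        _ = (2 * r * Q) ^ k := by rw [mul_pow, mul_pow]
    have heq : ((k : ℝ) * |s| ^ (k - 1) / (Nat.factorial k : ℝ)) * (B * Q ^ k)
        = B * (((k : ℝ) * |s| ^ (k - 1) * Q ^ k) / (Nat.factorial k : ℝ)) := by ring
    rw [heq]
    have hfacpos : (0 : ℝ) < (Nat.factorial k : ℝ) := by
      exact_mod_cast Nat.factorial_pos k
    have hueq : u k = B * ((2 * r * Q) ^ k / (Nat.factorial k : ℝ)) := rfl
    rw [hueq]
    gcongr
  have hnorm : ∀ k (s : ℝ), ‖g' k s‖ = ((k : ℝ) * |s| ^ (k - 1) / (Nat.factorial k : ℝ))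
      * ‖a k‖ := by
    intro k s
    simp only [hg'def, norm_mul, norm_div, norm_pow,
      Complex.norm_natCast, Complex.norm_real, Real.norm_eq_abs]
  have hbd : ∀ k (s : ℝ), s ∈ Set.Ioo (-r) r → ‖g' k s‖ ≤ u k := by
    intro k s hs
    have hsr : |s| ≤ r := by
      rw [abs_le]; exact ⟨hs.1.le, hs.2.le⟩
    refine le_trans ?_ (hkey k s hsr)
    rw [hnorm]
    have : (0 : ℝ) ≤ (k : ℝ) * |s| ^ (k - 1) / (Nat.factorial k : ℝ) := by positivity
    exact mul_le_mul_of_nonneg_left (hb k) this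
  have hg0 : Summable fun k => g k t := by
    refine Summable.of_norm (Summable.of_nonneg_of_le (fun k => norm_nonneg _) ?_ hu)
    intro k
    have h1 : ‖g k t‖ = (|t| ^ k / (Nat.factorial k : ℝ)) * ‖a k‖ := by
      simp only [hgdef, norm_mul, norm_div, norm_pow,
        Complex.norm_natCast, Complex.norm_real, Real.norm_eq_abs]
    rw [h1, hudef]
    have h2 : |t| ^ k ≤ (2 * r) ^ k := by
      apply pow_le_pow_left₀ (abs_nonneg t)
      nlinarith
    have hfacpos : (0 : ℝ) < (Nat.factorial k : ℝ) := by exact_mod_cast Nat.factorial_pos k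
    calc |t| ^ k / (Nat.factorial k : ℝ) * ‖a k‖
        ≤ |t| ^ k / (Nat.factorial k : ℝ) * (B * Q ^ k) :=
          mul_le_mul_of_nonneg_left (hb k) (by positivity)
      _ = B * ((|t| ^ k * Q ^ k) / (Nat.factorial k : ℝ)) := by ring
      _ ≤ B * (((2 * r) ^ k * Q ^ k) / (Nat.factorial k : ℝ)) := by
          gcongr
      _ = B * ((2 * r * Q) ^ k / (Nat.factorial k : ℝ)) := by rw [mul_pow (2*r) Q]
  have H := hasDerivAt_tsum_of_isPreconnected hu isOpen_Ioo isPreconnected_Ioo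
    (fun k s _ => hg k s) hbd ht hg0 ht
  have hsum' : Summable fun k => g' k t :=
    Summable.of_norm (Summable.of_nonneg_of_le (fun k => norm_nonneg _)
      (fun k => hbd k t ht) hu)
  have hval : (∑' k, g' k t) = ∑' k : ℕ, ((t : ℂ) ^ k / (Nat.factorial k : ℂ)) * a (k + 1) := by
    rw [hsum'.tsum_eq_zero_add]
    have h0 : g' 0 t = 0 := by simp [hg'def]
    rw [h0, zero_add]
    refine tsum_congr fun k => ?_
    have hfac : ((Nat.factorial (k + 1) : ℂ)) = ((k : ℂ) + 1) * (Nat.factorial k : ℂ) := by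
      push_cast [Nat.factorial_succ]; ring
    have hk1 : ((k : ℂ) + 1) ≠ 0 := Nat.cast_add_one_ne_zero k
    have hfk : ((Nat.factorial k : ℂ)) ≠ 0 := by
      exact_mod_cast Nat.cast_ne_zero.mpr (Nat.factorial_ne_zero k)
    simp only [hg'def, hfac, Nat.add_sub_cancel]
    push_cast
    field_simp
  rw [← hval]
  exact H


/-- If `𝓤ₙ(t) = Gₙ(t)·G₀(t)⁻¹` with `Gₙ(t) = Σₖ (tᵏ/k!)·𝓤⁰ₙ₊ₖ`, then the moments satisfy
`𝓤̇ₙ = 𝓤ₙ₊₁ − 𝓤ₙ·𝓤₁`. -/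
theorem stmt_9 (U0 : ℕ → Matrix (Fin 2) (Fin 2) ℂ) (C R : ℝ)
    (hbound : ∀ (n : ℕ) (i j : Fin 2), ‖U0 n i j‖ ≤ C * R ^ n)
    (G : ℕ → ℝ → Matrix (Fin 2) (Fin 2) ℂ)
    (hG : ∀ (n : ℕ) (t : ℝ), G n t =
      Matrix.of fun i j : Fin 2 =>
        ∑' k : ℕ, ((t : ℂ) ^ k / (Nat.factorial k : ℂ)) * U0 (n + k) i j)
    (hinv : ∀ t : ℝ, IsUnit (G 0 t).det)
    (U : ℕ → ℝ → Matrix (Fin 2) (Fin 2) ℂ)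
    (hU : ∀ (n : ℕ) (t : ℝ), U n t = G n t * (G 0 t)⁻¹) :
    ∀ (n : ℕ) (t : ℝ) (i j : Fin 2),
      HasDerivAt (fun s => U n s i j) ((U (n + 1) t - U n t * U 1 t) i j) t := by
  -- derivative of the entries of G
  have hGd : ∀ (n : ℕ) (t : ℝ) (i j : Fin 2),
      HasDerivAt (fun s => G n s i j) (G (n + 1) t i j) t := by
    intro n t i j
    have hb : ∀ k : ℕ, ‖U0 (n + k) i j‖ ≤ (|C| * |R| ^ n) * |R| ^ k := by
      intro k
      calc ‖U0 (n + k) i j‖ ≤ C * R ^ (n + k) := hbound (n + k) i j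
        _ ≤ |C * R ^ (n + k)| := le_abs_self _
        _ = (|C| * |R| ^ n) * |R| ^ k := by
            rw [abs_mul, abs_pow, pow_add]; ring
    have H := tsum_exp_hasDerivAt (|C| * |R| ^ n) |R| (by positivity) (abs_nonneg R)
      (fun k => U0 (n + k) i j) hb t
    have hfun : (fun s : ℝ => G n s i j)
        = fun s : ℝ => ∑' k : ℕ, ((s : ℂ) ^ k / (Nat.factorial k : ℂ)) * U0 (n + k) i j := by
      funext s; rw [hG n s]; rfl
    have hval : G (n + 1) t i j
        = ∑' k : ℕ, ((t : ℂ) ^ k / (Nat.factorial k : ℂ)) * U0 (n + (k + 1)) i j := by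
      rw [hG (n + 1) t]
      show _ = ∑' k : ℕ, ((t : ℂ) ^ k / (Nat.factorial k : ℂ)) * U0 (n + (k + 1)) i j
      exact tsum_congr fun k => by rw [show n + 1 + k = n + (k + 1) by omega]
    rw [hfun, hval]
    exact H
  intro n t i j
  have hdne : ∀ s : ℝ, (G 0 s).det ≠ 0 := fun s => isUnit_iff_ne_zero.mp (hinv s)
  -- derivative of adjugate entries
  have hAdj : ∀ k l : Fin 2,
      HasDerivAt (fun s => (G 0 s).adjugate k l) ((G 1 t).adjugate k l) t := by
    intro k l
    have e1 := hGd 0 t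
    fin_cases k <;> fin_cases l
    · simpa [Matrix.adjugate_fin_two] using e1 1 1
    · simpa [Matrix.adjugate_fin_two] using (e1 0 1).fun_neg
    · simpa [Matrix.adjugate_fin_two] using (e1 1 0).fun_neg
    · simpa [Matrix.adjugate_fin_two] using e1 0 0
  -- derivative of the determinant
  have hDfun : (fun s : ℝ => (G 0 s).det)
      = fun s => G 0 s 0 0 * G 0 s 1 1 - G 0 s 0 1 * G 0 s 1 0 :=
    funext fun s => Matrix.det_fin_two _
  have hDet : HasDerivAt (fun s => (G 0 s).det)
      ((G 1 t 0 0 * G 0 t 1 1 + G 0 t 0 0 * G 1 t 1 1)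
        - (G 1 t 0 1 * G 0 t 1 0 + G 0 t 0 1 * G 1 t 1 0)) t := by
    rw [hDfun]
    have h := ((hGd 0 t 0 0).fun_mul (hGd 0 t 1 1)).fun_sub ((hGd 0 t 0 1).fun_mul (hGd 0 t 1 0))
    simpa using h
  -- expression of U entries as a quotient
  have hUexp : ∀ (m : ℕ) (s : ℝ) (p q : Fin 2),
      U m s p q = (G m s p 0 * (G 0 s).adjugate 0 q + G m s p 1 * (G 0 s).adjugate 1 q)
        / (G 0 s).det := by
    intro m s p q
    rw [hU, Matrix.mul_apply, Fin.sum_univ_two, Matrix.inv_def, Ring.inverse_eq_inv']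
    simp only [Matrix.smul_apply, smul_eq_mul]
    field_simp
  -- derivative of the numerator
  have hnum : HasDerivAt
      (fun s => G n s i 0 * (G 0 s).adjugate 0 j + G n s i 1 * (G 0 s).adjugate 1 j)
      ((G (n + 1) t i 0 * (G 0 t).adjugate 0 j + G n t i 0 * (G 1 t).adjugate 0 j)
        + (G (n + 1) t i 1 * (G 0 t).adjugate 1 j + G n t i 1 * (G 1 t).adjugate 1 j)) t :=
    ((hGd n t i 0).mul (hAdj 0 j)).add ((hGd n t i 1).mul (hAdj 1 j))
  have hq := hnum.fun_div hDet (hdne t)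
  have hres := hq.congr_of_eventuallyEq
    (Filter.Eventually.of_forall fun s => hUexp n s i j)
  convert hres using 1
  · rfl
  have h0 : G 0 t 0 0 * G 0 t 1 1 - G 0 t 0 1 * G 0 t 1 0 ≠ 0 := by
    have := hdne t; rwa [Matrix.det_fin_two] at this
  simp only [Matrix.sub_apply, Matrix.mul_apply, Fin.sum_univ_two]
  rw [hUexp, hUexp, hUexp, hUexp, hUexp]
  fin_cases j <;>
    simp only [Matrix.adjugate_fin_two, Matrix.det_fin_two, Matrix.cons_val', Matrix.cons_val_zero,
      Matrix.cons_val_one, Matrix.head_cons, Matrix.empty_val',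
      Matrix.cons_val_fin_one, Matrix.head_fin_const, Matrix.of_apply, Fin.zero_eta, Fin.mk_one] <;>
    field_simp <;>
    ring
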